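/- Let u be an inner function. The dual truncated Toeplitz operator D_{e₁} on K_u^⊥ (the dual truncated Toeplitz operator with symbol φ(ζ) = ζ) is an isometry if and only if u is a.e. equal to a constant of modulus 1. -/

import Mathlib

open MeasureTheory Complex
open scoped InnerProductSpace ENNReal

noncomputable section

namespace DTTO

instance fact2pi : Fact (0 < 2 * Real.pi) := ⟨by positivity⟩

/-- The circle, realized as `ℝ / 2πℤ`. -/
abbrev 𝕋c := AddCircle (2 * Real.pi)

/-- Normalized Haar (Lebesgue) measure on the circle. -/
abbrev μT : Measure 𝕋c := AddCircle.haarAddCircle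

/-- `L²(𝕋)`. -/
abbrev L2 := Lp ℂ 2 μT

/-- `L∞(𝕋)`. -/
abbrev Linf := Lp ℂ ⊤ μT

lemma memL2_smul (φ : Linf) (f : L2) : MemLp (⇑φ • ⇑f) 2 μT :=
  (Lp.memLp f).smul (Lp.memLp φ)

/-- Multiplication operator `M_φ : L² → L²` by a function `φ ∈ L∞`. -/
def Mmul (φ : Linf) : L2 →L[ℂ] L2 :=
  LinearMap.mkContinuous
    { toFun := fun f => (memL2_smul φ f).toLp _
      map_add' := fun f g => by
        refine Lp.ext ?_
        filter_upwards [MemLp.coeFn_toLp (memL2_smul φ (f + g)),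
          MemLp.coeFn_toLp (memL2_smul φ f), MemLp.coeFn_toLp (memL2_smul φ g),
          Lp.coeFn_add f g,
          Lp.coeFn_add ((memL2_smul φ f).toLp _) ((memL2_smul φ g).toLp _)] with
            x h1 h2 h3 h4 h5
        rw [h1, h5]
        simp only [Pi.add_apply, h2, h3]
        simp only [Pi.smul_apply', h4, Pi.add_apply, smul_add]
      map_smul' := fun c f => by
        refine Lp.ext ?_
        filter_upwards [MemLp.coeFn_toLp (memL2_smul φ (c • f)),
          MemLp.coeFn_toLp (memL2_smul φ f),
          Lp.coeFn_smul c f,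
          Lp.coeFn_smul c ((memL2_smul φ f).toLp _)] with x h1 h2 h3 h4
        rw [h1, RingHom.id_apply, h4]
        simp only [Pi.smul_apply, Pi.smul_apply', h2, h3]
        exact smul_comm _ _ _ }
    ‖φ‖ (fun f => by
      simp only [LinearMap.coe_mk, AddHom.coe_mk]
      rw [Lp.norm_toLp, Lp.norm_def, Lp.norm_def]
      rw [← ENNReal.toReal_mul]
      refine ENNReal.toReal_mono ?_ ?_
      · exact ENNReal.mul_ne_top (Lp.eLpNorm_ne_top φ) (Lp.eLpNorm_ne_top f)
      · exact eLpNorm_smul_le_eLpNorm_top_mul_eLpNorm 2 (Lp.aestronglyMeasurable f) ⇑φ)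

/-- The canonical inclusion `L∞ ⊆ L²` (the measure is finite). -/
def toL2 (φ : Linf) : L2 := ((Lp.memLp φ).mono_exponent le_top).toLp _

/-- The Hardy space `H²`, the closed linear span in `L²` of the exponentials `e_n`, `n ≥ 0`. -/
def H2 : Submodule ℂ L2 :=
  (Submodule.span ℂ (Set.range fun n : ℕ => (fourierLp 2 (n : ℤ) : L2))).topologicalClosure

instance : CompleteSpace H2 := (Submodule.isClosed_topologicalClosure _).completeSpace_coe

/-- `H²₋ = L² ⊖ H²`. -/
def Hminus : Submodule ℂ L2 := H2ᗮ

instance : CompleteSpace Hminus := (Submodule.isClosed_orthogonal _).completeSpace_coe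

/-- `H∞ = H² ∩ L∞`. -/
def MemHinf (φ : Linf) : Prop := toL2 φ ∈ H2

/-- An inner function: an element of `H² ∩ L∞` of modulus one a.e. -/
structure IsInnerFn (u : Linf) : Prop where
  memH2 : MemHinf u
  unimod : ∀ᵐ z ∂μT, ‖u z‖ = 1

/-- `u` is nonconstant (not a.e. equal to a constant). -/
def Nonconst (u : Linf) : Prop := ¬ ∃ c : ℂ, (⇑u : 𝕋c → ℂ) =ᵐ[μT] fun _ => c

/-- The subspace `uH²` of `L²`. -/
def uH2 (u : Linf) : Submodule ℂ L2 := H2.map (Mmul u).toLinearMap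

/-- The model space `K_u = H² ⊖ uH² = H² ∩ (uH²)ᗮ`. -/
def Ku (u : Linf) : Submodule ℂ L2 := H2 ⊓ (uH2 u)ᗮ

lemma isClosed_Ku (u : Linf) : IsClosed ((Ku u : Set L2)) := by
  have h : (Ku u : Set L2) = (H2 : Set L2) ∩ ((uH2 u)ᗮ : Set L2) := rfl
  rw [h]
  exact (Submodule.isClosed_topologicalClosure _).inter (Submodule.isClosed_orthogonal _)

instance (u : Linf) : CompleteSpace (Ku u) := (isClosed_Ku u).completeSpace_coe

/-- `K_u^⊥ = L² ⊖ K_u`. -/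
def KuP (u : Linf) : Submodule ℂ L2 := (Ku u)ᗮ

instance (u : Linf) : CompleteSpace (KuP u) := (Submodule.isClosed_orthogonal _).completeSpace_coe

/-- Dual truncated Toeplitz operator `D_φ` on `K_u^⊥`. -/
def Dop (u φ : Linf) : KuP u →L[ℂ] KuP u :=
  Submodule.orthogonalProjectionOnto (KuP u) ∘L Mmul φ ∘L (KuP u).subtypeL

/-- Truncated Toeplitz operator `A_φ` on `K_u`. -/
def Aop (u φ : Linf) : Ku u →L[ℂ] Ku u :=
  Submodule.orthogonalProjectionOnto (Ku u) ∘L Mmul φ ∘L (Ku u).subtypeL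

/-- The operator `B_φ : K_u → K_u^⊥`, `B_φ f = (I - P_{K_u})(φ f)`. -/
def Bop (u φ : Linf) : Ku u →L[ℂ] KuP u :=
  Submodule.orthogonalProjectionOnto (KuP u) ∘L Mmul φ ∘L (Ku u).subtypeL

/-- Toeplitz operator `T_φ : H² → H²`. -/
def Top (φ : Linf) : H2 →L[ℂ] H2 :=
  Submodule.orthogonalProjectionOnto H2 ∘L Mmul φ ∘L H2.subtypeL

/-- Hankel operator `H_φ : H² → H²₋`. -/
def Hop (φ : Linf) : H2 →L[ℂ] Hminus :=
  Submodule.orthogonalProjectionOnto Hminus ∘L Mmul φ ∘L H2.subtypeL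

/-- The exponential `e₁(ζ) = ζ` as an element of `L∞`. -/
def e1 : Linf := fourierLp ⊤ 1

/-- The exponential `e₋₁(ζ) = ζ̄` as an element of `L∞`. -/
def eneg1 : Linf := fourierLp ⊤ (-1)

/-- The operator `Q : H²₋ → H²₋`, `Q g = P₋(e₁ g)`. -/
def Qop : Hminus →L[ℂ] Hminus :=
  Submodule.orthogonalProjectionOnto Hminus ∘L Mmul e1 ∘L Hminus.subtypeL

/-- `u(0)`, the 0-th Fourier coefficient. -/
def coef0 (u : Linf) : ℂ := fourierCoeff (⇑u) 0

/-- Minimum modulus of a bounded operator. -/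
def minMod {E F : Type*} [NormedAddCommGroup E] [NormedSpace ℂ E]
    [NormedAddCommGroup F] [NormedSpace ℂ F] (T : E →L[ℂ] F) : ℝ :=
  ⨅ x : {x : E // ‖x‖ = 1}, ‖T x.1‖

/-- Complex conjugation on `L∞`. -/
lemma memLinf_star (φ : Linf) : MemLp (fun z => (starRingEnd ℂ) (φ z)) ⊤ μT := by
  refine ⟨continuous_star.comp_aestronglyMeasurable (Lp.aestronglyMeasurable φ), ?_⟩
  rw [eLpNorm_congr_norm_ae (g := ⇑φ) (Filter.Eventually.of_forall fun z => norm_star _)]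
  exact Lp.eLpNorm_lt_top φ

/-- The complex conjugate `φ̄ ∈ L∞` of `φ ∈ L∞`. -/
def conjL (φ : Linf) : Linf := (memLinf_star φ).toLp _

lemma memLinf_mul (φ ψ : Linf) : MemLp (⇑φ • ⇑ψ) ⊤ μT :=
  (Lp.memLp ψ).smul (Lp.memLp φ)

/-- The pointwise product of two elements of `L∞`. -/
def mulL (φ ψ : Linf) : Linf := (memLinf_mul φ ψ).toLp _

end DTTO

namespace DTTO

lemma inner_fourierLp_eq_zero {m n : ℤ} (h : m ≠ n) :
    (inner ℂ (fourierLp 2 m : L2) (fourierLp 2 n : L2) : ℂ) = 0 := by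
  have hcoe := congrFun (coe_fourierBasis (T := 2 * Real.pi))
  have h2 := (fourierBasis (T := 2 * Real.pi)).orthonormal.2 (i := m) (j := n) h
  simpa only [hcoe] using h2

lemma span_le_orth_em1 :
    Submodule.span ℂ (Set.range fun n : ℕ => (fourierLp 2 (n : ℤ) : L2))
      ≤ (ℂ ∙ (fourierLp 2 (-1) : L2))ᗮ := by
  rw [Submodule.span_le]
  rintro x ⟨n, rfl⟩
  rw [SetLike.mem_coe, Submodule.mem_orthogonal]
  intro w hw
  obtain ⟨c, rfl⟩ := Submodule.mem_span_singleton.1 hw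
  rw [inner_smul_left, inner_fourierLp_eq_zero (by omega : (-1 : ℤ) ≠ (n : ℤ)), mul_zero]

lemma H2_le_orth_em1 : H2 ≤ (ℂ ∙ (fourierLp 2 (-1) : L2))ᗮ :=
  Submodule.topologicalClosure_minimal _ span_le_orth_em1 (Submodule.isClosed_orthogonal _)

/-- `e₋₁ ∈ H²₋`. -/
lemma em1_mem : (fourierLp 2 (-1) : L2) ∈ Hminus := by
  unfold Hminus
  rw [Submodule.mem_orthogonal]
  intro v hv
  have h := H2_le_orth_em1 hv
  rw [Submodule.mem_orthogonal] at h
  exact inner_eq_zero_symm.mp (h _ (Submodule.mem_span_singleton_self _))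

/-- `e₋₁` as an element of `H²₋`. -/
def em1 : Hminus := ⟨(fourierLp 2 (-1) : L2), em1_mem⟩

/-- For `f ∈ K_u`, the function `u f ∈ uH² ⊆ K_u^⊥`. -/
lemma mul_mem_KuP (u : Linf) (f : Ku u) : Mmul u (f : L2) ∈ KuP u := by
  unfold KuP
  rw [Submodule.mem_orthogonal]
  intro v hv
  have hv2 : v ∈ (uH2 u)ᗮ := (Submodule.mem_inf.1 hv).2
  have hm : Mmul u (f : L2) ∈ uH2 u :=
    Submodule.mem_map_of_mem (Submodule.mem_inf.1 f.2).1
  rw [Submodule.mem_orthogonal] at hv2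
  exact inner_eq_zero_symm.mp (hv2 _ hm)

lemma Ku_le_H2 (u : Linf) : Ku u ≤ H2 := inf_le_left

/-- The inclusion `K_u ⊆ H²` as a continuous linear map. -/
def KuIncl (u : Linf) : Ku u →L[ℂ] H2 :=
  LinearMap.mkContinuous (Submodule.inclusion (Ku_le_H2 u)) 1
    (fun f => by rw [one_mul]; exact le_of_eq rfl)

end DTTO

namespace DTTO



/-! ### Auxiliary lemmas -/

lemma Mmul_coeFn (φ : Linf) (f : L2) : ⇑(Mmul φ f) =ᵐ[μT] ⇑φ • ⇑f :=
  MemLp.coeFn_toLp (memL2_smul φ f)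

lemma toL2_coeFn (φ : Linf) : ⇑(toL2 φ) =ᵐ[μT] ⇑φ :=
  MemLp.coeFn_toLp _

lemma conjL_coeFn (φ : Linf) : ⇑(conjL φ) =ᵐ[μT] fun z => (starRingEnd ℂ) (φ z) :=
  MemLp.coeFn_toLp _

lemma e1_coeFn : ⇑(e1) =ᵐ[μT] fourier 1 := coeFn_fourierLp ⊤ 1

lemma eneg1_coeFn : ⇑(eneg1) =ᵐ[μT] fourier (-1) := coeFn_fourierLp ⊤ (-1)

lemma inner_L2 (g f : L2) : (inner ℂ g f : ℂ) = ∫ x, (starRingEnd ℂ) (g x) * f x ∂μT := by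
  rw [MeasureTheory.L2.inner_def]
  simp only [RCLike.inner_apply]
  simp only [mul_comm]

lemma inner_Mmul_right (g : L2) (φ : Linf) (f : L2) :
    (inner ℂ g (Mmul φ f) : ℂ) = ∫ x, (starRingEnd ℂ) (g x) * (φ x * f x) ∂μT := by
  rw [inner_L2]
  refine integral_congr_ae ?_
  filter_upwards [Mmul_coeFn φ f] with x hx
  rw [hx, Pi.smul_apply', smul_eq_mul]

lemma inner_Mmul_left (g : L2) (φ : Linf) (f : L2) :
    (inner ℂ (Mmul φ f) g : ℂ) = ∫ x, (starRingEnd ℂ) (φ x * f x) * g x ∂μT := by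
  rw [inner_L2]
  refine integral_congr_ae ?_
  filter_upwards [Mmul_coeFn φ f] with x hx
  rw [hx, Pi.smul_apply', smul_eq_mul]

lemma norm_Mmul_of_unimod {φ : Linf} (hφ : ∀ᵐ z ∂μT, ‖φ z‖ = 1) (f : L2) :
    ‖Mmul φ f‖ = ‖f‖ := by
  rw [Lp.norm_def, Lp.norm_def]
  congr 1
  calc eLpNorm (⇑(Mmul φ f)) 2 μT = eLpNorm (⇑φ • ⇑f) 2 μT :=
        eLpNorm_congr_ae (Mmul_coeFn φ f)
  _ = eLpNorm (⇑f) 2 μT := by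
      refine eLpNorm_congr_norm_ae ?_
      filter_upwards [hφ] with x hx
      rw [Pi.smul_apply', smul_eq_mul, norm_mul, hx, one_mul]

lemma abs_fourier' (n : ℤ) (x : 𝕋c) : ‖fourier n x‖ = 1 := by
  rw [fourier_apply]; exact Circle.norm_coe _

lemma e1_unimod : ∀ᵐ z ∂μT, ‖e1 z‖ = 1 := by
  filter_upwards [e1_coeFn] with x hx
  rw [hx]; exact abs_fourier' 1 x

lemma Mmul_fourierLp (n m : ℤ) :
    Mmul (fourierLp ⊤ n) (fourierLp 2 m) = (fourierLp 2 (n + m) : L2) := by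
  refine Lp.ext ?_
  filter_upwards [Mmul_coeFn (fourierLp ⊤ n) (fourierLp 2 m), coeFn_fourierLp ⊤ n,
    coeFn_fourierLp 2 m, coeFn_fourierLp 2 (n + m)] with x h1 h2 h3 h4
  rw [h1, h4, Pi.smul_apply', h2, h3, smul_eq_mul, ← fourier_add]

lemma fourierLp_nat_mem_H2 (n : ℕ) : (fourierLp 2 (n : ℤ) : L2) ∈ H2 :=
  Submodule.le_topologicalClosure _ (Submodule.subset_span ⟨n, rfl⟩)

lemma Mmul_mem_H2 (φ : Linf) (hφ : ∀ n : ℕ, Mmul φ (fourierLp 2 (n : ℤ)) ∈ H2)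
    {f : L2} (hf : f ∈ H2) : Mmul φ f ∈ H2 := by
  have hcl : IsClosed ((H2.comap (Mmul φ).toLinearMap : Submodule ℂ L2) : Set L2) := by
    have heq : ((H2.comap (Mmul φ).toLinearMap : Submodule ℂ L2) : Set L2)
        = (Mmul φ) ⁻¹' (H2 : Set L2) := rfl
    rw [heq]
    exact (Submodule.isClosed_topologicalClosure _).preimage (Mmul φ).continuous
  have hle : H2 ≤ H2.comap (Mmul φ).toLinearMap := by
    refine Submodule.topologicalClosure_minimal _ ?_ hcl
    rw [Submodule.span_le]
    rintro x ⟨n, rfl⟩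
    exact hφ n
  exact hle hf

lemma Mmul_fourier_toL2 (φ : Linf) (n : ℤ) :
    Mmul φ (fourierLp 2 n) = Mmul (fourierLp ⊤ n) (toL2 φ) := by
  refine Lp.ext ?_
  filter_upwards [Mmul_coeFn φ (fourierLp 2 n), Mmul_coeFn (fourierLp ⊤ n) (toL2 φ),
    coeFn_fourierLp 2 n, coeFn_fourierLp ⊤ n, toL2_coeFn φ] with x h1 h2 h3 h4 h5
  rw [h1, h2, Pi.smul_apply', Pi.smul_apply', h3, h4, h5, smul_eq_mul, smul_eq_mul, mul_comm]

lemma Mmul_mem_H2_of_memHinf {u : Linf} (hu : MemHinf u) {f : L2} (hf : f ∈ H2) :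
    Mmul u f ∈ H2 := by
  refine Mmul_mem_H2 u (fun n => ?_) hf
  rw [Mmul_fourier_toL2]
  refine Mmul_mem_H2 (fourierLp ⊤ (n : ℤ)) (fun k => ?_) hu
  rw [Mmul_fourierLp]
  have h : ((n : ℤ) + (k : ℤ)) = ((n + k : ℕ) : ℤ) := by push_cast; ring_nf
  rw [h]; exact fourierLp_nat_mem_H2 _

lemma uH2_le_H2 {u : Linf} (hu : MemHinf u) : uH2 u ≤ H2 := by
  rintro x ⟨f, hf, rfl⟩
  exact Mmul_mem_H2_of_memHinf hu hf

lemma conj_mul_self_eq_one {z : ℂ} (hz : ‖z‖ = 1) :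
    (starRingEnd ℂ) z * z = 1 := by
  rw [mul_comm, Complex.mul_conj, Complex.normSq_eq_norm_sq, hz]
  norm_num

lemma Mmul_conj_Mmul {u : Linf} (hu : ∀ᵐ z ∂μT, ‖u z‖ = 1) (f : L2) :
    Mmul (conjL u) (Mmul u f) = f := by
  refine Lp.ext ?_
  filter_upwards [Mmul_coeFn (conjL u) (Mmul u f), Mmul_coeFn u f, conjL_coeFn u, hu]
    with x h1 h2 h3 h4
  rw [h1, Pi.smul_apply', h3, h2, Pi.smul_apply', smul_eq_mul, smul_eq_mul, ← mul_assoc,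
    conj_mul_self_eq_one h4, one_mul]

lemma Mmul_Mmul_conj {u : Linf} (hu : ∀ᵐ z ∂μT, ‖u z‖ = 1) (f : L2) :
    Mmul u (Mmul (conjL u) f) = f := by
  refine Lp.ext ?_
  filter_upwards [Mmul_coeFn u (Mmul (conjL u) f), Mmul_coeFn (conjL u) f, conjL_coeFn u, hu]
    with x h1 h2 h3 h4
  rw [h1, Pi.smul_apply', h2, Pi.smul_apply', h3, smul_eq_mul, smul_eq_mul, ← mul_assoc,
    mul_comm (u x), conj_mul_self_eq_one h4, one_mul]

lemma inner_fourierLp_Mmul_eneg1 (m : ℤ) (f : L2) :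
    (inner ℂ (fourierLp 2 m : L2) (Mmul eneg1 f) : ℂ)
      = inner ℂ (fourierLp 2 (m + 1) : L2) f := by
  rw [inner_Mmul_right, inner_L2]
  refine integral_congr_ae ?_
  filter_upwards [coeFn_fourierLp 2 m, eneg1_coeFn, coeFn_fourierLp 2 (m + 1)]
    with x h1 h2 h3
  rw [h1, h2, h3]
  have h4 : (starRingEnd ℂ) (fourier (m + 1) x)
      = (starRingEnd ℂ) (fourier m x) * fourier (-1) x := by
    rw [← fourier_neg, ← fourier_neg, ← fourier_add]
    congr 1; ring_nf
  rw [h4]; ring_nf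

lemma inner_Mmul_e1_adjoint (f g : L2) :
    (inner ℂ (Mmul e1 f) g : ℂ) = inner ℂ f (Mmul eneg1 g) := by
  rw [inner_Mmul_left, inner_Mmul_right]
  refine integral_congr_ae ?_
  filter_upwards [e1_coeFn, eneg1_coeFn] with x h1 h2
  rw [h1, h2, map_mul, ← fourier_neg]
  ring_nf

lemma inner_em_eq_zero_of_mem_H2 {m : ℤ} (hm : m < 0) {f : L2} (hf : f ∈ H2) :
    (inner ℂ (fourierLp 2 m : L2) f : ℂ) = 0 := by
  have hle : H2 ≤ (ℂ ∙ (fourierLp 2 m : L2))ᗮ := by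
    refine Submodule.topologicalClosure_minimal _ ?_ (Submodule.isClosed_orthogonal _)
    rw [Submodule.span_le]
    rintro x ⟨n, rfl⟩
    rw [SetLike.mem_coe, Submodule.mem_orthogonal]
    intro w hw
    obtain ⟨c, rfl⟩ := Submodule.mem_span_singleton.1 hw
    rw [inner_smul_left, inner_fourierLp_eq_zero (by omega : m ≠ (n : ℤ)), mul_zero]
  exact (Submodule.mem_orthogonal _ _).1 (hle hf) _ (Submodule.mem_span_singleton_self _)

lemma eq_zero_of_inner_fourierLp (f : L2)
    (h : ∀ m : ℤ, (inner ℂ (fourierLp 2 m : L2) f : ℂ) = 0) : f = 0 := by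
  have hcoe := congrFun (coe_fourierBasis (T := 2 * Real.pi))
  have h2 : (fourierBasis (T := 2 * Real.pi)).repr f = 0 := by
    ext m
    rw [HilbertBasis.repr_apply_apply]
    simp only [hcoe]
    rw [h m]
    simp
  simpa using (fourierBasis (T := 2 * Real.pi)).repr.map_eq_zero_iff.mp h2

/-! ### Forward direction -/

lemma Ku_eq_bot_of_isometry {u : Linf} (hiso : ∀ f : KuP u, ‖Dop u e1 f‖ = ‖f‖) :
    Ku u = ⊥ := by
  -- Step 1: `P_{K_u} (e₁ f) = 0` for every `f ∈ K_u^⊥`.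
  have hproj : ∀ f : KuP u, Mmul e1 (f : L2) ∈ (Ku u)ᗮ := by
    intro f
    rw [← Submodule.orthogonalProjectionOnto_eq_zero_iff]
    have hpyth := Submodule.norm_sq_eq_add_norm_sq_projection (Mmul e1 (f : L2)) (Ku u)
    have h1 : ‖Mmul e1 (f : L2)‖ = ‖f‖ := norm_Mmul_of_unimod e1_unimod _
    have h2 : ‖Submodule.orthogonalProjectionOnto (Ku u)ᗮ (Mmul e1 (f : L2))‖ = ‖f‖ := hiso f
    rw [h1, h2] at hpyth
    have h3 : ‖Submodule.orthogonalProjectionOnto (Ku u) (Mmul e1 (f : L2))‖ ^ 2 = 0 := by linarith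
    have h4 : ‖Submodule.orthogonalProjectionOnto (Ku u) (Mmul e1 (f : L2))‖ = 0 := by
      nlinarith [norm_nonneg (Submodule.orthogonalProjectionOnto (Ku u) (Mmul e1 (f : L2)))]
    exact norm_eq_zero.mp h4
  -- Step 2: multiplication by `e₋₁` preserves `K_u`.
  have hstep : ∀ g : L2, g ∈ Ku u → Mmul eneg1 g ∈ Ku u := by
    intro g hg
    have hmem : Mmul eneg1 g ∈ (KuP u)ᗮ := by
      rw [Submodule.mem_orthogonal]
      intro w hw
      have h0 : (inner ℂ (Mmul e1 w) g : ℂ) = 0 := by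
        have := (Submodule.mem_orthogonal _ _).1 (hproj ⟨w, hw⟩) g hg
        rw [inner_eq_zero_symm] at this
        exact this
      rw [← inner_Mmul_e1_adjoint]
      exact h0
    rwa [KuP, Submodule.orthogonal_orthogonal] at hmem
  -- Step 3: every element of `K_u` is zero.
  rw [Submodule.eq_bot_iff]
  intro g hg
  -- iterates of multiplication by `e₋₁`
  have hiter : ∀ n : ℕ, ∀ h : L2, h ∈ Ku u → ∀ m : ℤ,
      (inner ℂ (fourierLp 2 m : L2) ((Mmul eneg1)^[n] h) : ℂ)
        = inner ℂ (fourierLp 2 (m + n) : L2) h := by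
    intro n
    induction n with
    | zero => intro h hh m; simp
    | succ n ih =>
      intro h hh m
      rw [Function.iterate_succ_apply, ih (Mmul eneg1 h) (hstep h hh) m,
        inner_fourierLp_Mmul_eneg1]
      congr 2
      push_cast; ring_nf
  have hiterKu : ∀ n : ℕ, (Mmul eneg1)^[n] g ∈ Ku u := by
    intro n
    induction n with
    | zero => simpa using hg
    | succ n ih => rw [Function.iterate_succ_apply']; exact hstep _ ih
  refine eq_zero_of_inner_fourierLp g (fun m => ?_)
  rcases lt_or_ge m 0 with hm | hm
  · exact inner_em_eq_zero_of_mem_H2 hm (Ku_le_H2 u hg)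
  · have hn : m = (-1 : ℤ) + ((m.toNat + 1 : ℕ) : ℤ) := by
      push_cast; omega
    rw [hn, ← hiter (m.toNat + 1) g hg (-1)]
    exact inner_em_eq_zero_of_mem_H2 (by norm_num) (Ku_le_H2 u (hiterKu _))

lemma const_of_Ku_eq_bot {u : Linf} (hu : IsInnerFn u) (hbot : Ku u = ⊥) :
    ∃ c : ℂ, ‖c‖ = 1 ∧ (⇑u : 𝕋c → ℂ) =ᵐ[μT] fun _ => c := by
  classical
  -- `1 ∈ closure (uH²)`
  set W := (uH2 u).topologicalClosure with hW
  haveI : CompleteSpace W := (Submodule.isClosed_topologicalClosure _).completeSpace_coe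
  have hWH2 : W ≤ H2 :=
    Submodule.topologicalClosure_minimal _ (uH2_le_H2 hu.memH2)
      (Submodule.isClosed_topologicalClosure _)
  have he0 : (fourierLp 2 (0 : ℤ) : L2) ∈ H2 := fourierLp_nat_mem_H2 0
  have hw : (fourierLp 2 (0 : ℤ) : L2)
      - Submodule.orthogonalProjectionOnto W (fourierLp 2 (0 : ℤ)) ∈ Ku u := by
    refine Submodule.mem_inf.mpr ⟨?_, ?_⟩
    · exact Submodule.sub_mem _ he0 (hWH2 (Submodule.orthogonalProjectionOnto W _).2)
    · exact Submodule.orthogonal_le (Submodule.le_topologicalClosure _)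
        (Submodule.sub_starProjection_mem_orthogonal _)
  rw [hbot, Submodule.mem_bot, sub_eq_zero] at hw
  have he0W : (fourierLp 2 (0 : ℤ) : L2) ∈ W := by
    rw [hw]; exact (Submodule.orthogonalProjectionOnto W _).2
  -- the function `h = ū` lies in `H²`
  have hWinv : W ≤ H2.comap (Mmul (conjL u)).toLinearMap := by
    refine Submodule.topologicalClosure_minimal _ ?_ ?_
    · rintro x ⟨f, hf, rfl⟩
      have hcc : Mmul (conjL u) (Mmul u f) = f := Mmul_conj_Mmul hu.unimod f
      simp only [Submodule.mem_comap, ContinuousLinearMap.coe_coe]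
      rw [hcc]
      exact hf
    · have heq : ((H2.comap (Mmul (conjL u)).toLinearMap : Submodule ℂ L2) : Set L2)
          = (Mmul (conjL u)) ⁻¹' (H2 : Set L2) := rfl
      rw [heq]
      exact (Submodule.isClosed_topologicalClosure _).preimage (Mmul (conjL u)).continuous
  set h : L2 := Mmul (conjL u) (fourierLp 2 (0 : ℤ)) with hh
  have hhH2 : h ∈ H2 := hWinv he0W
  -- coefficients of `u` vanish away from 0
  have hcoef : ∀ m : ℤ, m ≠ 0 → (inner ℂ (fourierLp 2 m : L2) (toL2 u) : ℂ) = 0 := by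
    intro m hm
    rcases lt_or_ge m 0 with hneg | hpos
    · exact inner_em_eq_zero_of_mem_H2 hneg hu.memH2
    · have h1 : (inner ℂ (fourierLp 2 (-m) : L2) h : ℂ) = 0 :=
        inner_em_eq_zero_of_mem_H2 (by omega) hhH2
      have h2 : (inner ℂ (fourierLp 2 (-m) : L2) h : ℂ)
          = (starRingEnd ℂ) (inner ℂ (fourierLp 2 m : L2) (toL2 u) : ℂ) := by
        rw [inner_L2, inner_L2, ← integral_conj]
        refine integral_congr_ae ?_
        filter_upwards [coeFn_fourierLp 2 (-m), coeFn_fourierLp 2 m, conjL_coeFn u,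
          Mmul_coeFn (conjL u) (fourierLp 2 (0 : ℤ)), coeFn_fourierLp 2 (0 : ℤ),
          toL2_coeFn u] with x k1 k2 k4 k5 k6 k7
        simp only [hh, k1, k2, k5, k6, k7, Pi.smul_apply', k4, smul_eq_mul, fourier_zero,
          mul_one, fourier_neg, map_mul, Complex.conj_conj]
      rw [h2, starRingEnd_apply, star_eq_zero] at h1
      exact h1
  set c : ℂ := (inner ℂ (fourierLp 2 (0 : ℤ) : L2) (toL2 u) : ℂ) with hc
  have hnorm1 : (inner ℂ (fourierLp 2 (0 : ℤ) : L2) (fourierLp 2 (0 : ℤ) : L2) : ℂ) = 1 := by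
    have hcoe := congrFun (coe_fourierBasis (T := 2 * Real.pi))
    have h0 : ‖(fourierLp 2 (0 : ℤ) : L2)‖ = 1 := by
      simpa only [hcoe] using (fourierBasis (T := 2 * Real.pi)).orthonormal.1 (0 : ℤ)
    rw [@inner_self_eq_norm_sq_to_K ℂ, h0]
    norm_num
  have hv : toL2 u - c • (fourierLp 2 (0 : ℤ) : L2) = 0 := by
    refine eq_zero_of_inner_fourierLp _ (fun m => ?_)
    rw [inner_sub_right, inner_smul_right]
    by_cases hm : m = 0
    · subst hm
      rw [hnorm1, mul_one, ← hc, sub_self]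
    · rw [hcoef m hm, inner_fourierLp_eq_zero hm, mul_zero, sub_zero]
  have huc : (⇑u : 𝕋c → ℂ) =ᵐ[μT] fun _ => c := by
    rw [sub_eq_zero] at hv
    have hae : ⇑(toL2 u) =ᵐ[μT] ⇑(c • (fourierLp 2 (0 : ℤ) : L2)) := by rw [hv]
    filter_upwards [toL2_coeFn u, hae, Lp.coeFn_smul c (fourierLp 2 (0 : ℤ) : L2),
      coeFn_fourierLp 2 (0 : ℤ)] with x k1 k2 k3 k4
    rw [← k1, k2, k3, Pi.smul_apply, k4, fourier_zero, smul_eq_mul, mul_one]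
  have habs : ‖c‖ = 1 := by
    have hne : (μT : Measure 𝕋c) ≠ 0 := IsProbabilityMeasure.ne_zero μT
    haveI : (ae μT).NeBot := ae_neBot.mpr hne
    obtain ⟨x, hx1, hx2⟩ := (hu.unimod.and huc).exists
    have hx2' : (⇑u : 𝕋c → ℂ) x = c := hx2
    rw [← hx2']
    exact hx1
  exact ⟨c, habs, huc⟩

/-! ### Backward direction -/

lemma Ku_eq_bot_of_const {u : Linf} {c : ℂ} (hc : ‖c‖ = 1)
    (huc : (⇑u : 𝕋c → ℂ) =ᵐ[μT] fun _ => c) : Ku u = ⊥ := by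
  have hc0 : c ≠ 0 := by
    intro h; rw [h] at hc; simp at hc
  have hMu : ∀ f : L2, Mmul u f = c • f := by
    intro f
    refine Lp.ext ?_
    filter_upwards [Mmul_coeFn u f, huc, Lp.coeFn_smul c f] with x h1 h2 h3
    rw [h1, h3, Pi.smul_apply', h2, Pi.smul_apply]
  have huH2 : uH2 u = H2 := by
    apply le_antisymm
    · rintro x ⟨f, hf, rfl⟩
      show Mmul u f ∈ H2
      rw [hMu]
      exact Submodule.smul_mem _ _ hf
    · intro f hf
      refine ⟨c⁻¹ • f, Submodule.smul_mem _ _ hf, ?_⟩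
      show Mmul u (c⁻¹ • f) = f
      rw [hMu, smul_smul, mul_inv_cancel₀ hc0, one_smul]
  show H2 ⊓ (uH2 u)ᗮ = ⊥
  rw [huH2]
  exact Submodule.inf_orthogonal_eq_bot H2

/-- The dual truncated Toeplitz operator `D_{e₁}` on `K_u^⊥` is an isometry
iff `u` is a.e. equal to a constant of modulus `1`. -/
theorem Du_isometry_iff_const (u : Linf) (hu : IsInnerFn u) :
    (∀ f : KuP u, ‖Dop u e1 f‖ = ‖f‖)
      ↔ ∃ c : ℂ, ‖c‖ = 1 ∧ (⇑u : 𝕋c → ℂ) =ᵐ[μT] fun _ => c := by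
  constructor
  · intro hiso
    exact const_of_Ku_eq_bot hu (Ku_eq_bot_of_isometry hiso)
  · rintro ⟨c, hc, huc⟩ f
    have hbot : Ku u = ⊥ := Ku_eq_bot_of_const hc huc
    have htop : KuP u = ⊤ := by
      show (Ku u)ᗮ = ⊤
      rw [hbot]
      exact Submodule.bot_orthogonal_eq_top
    have hmem : Mmul e1 (f : L2) ∈ KuP u :=
      Submodule.eq_top_iff'.mp htop _
    have hD : ((Dop u e1 f : KuP u) : L2) = Mmul e1 (f : L2) := by
      show (Submodule.orthogonalProjectionOnto (KuP u) (Mmul e1 ((KuP u).subtypeL f)) : L2) = _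
      exact Submodule.starProjection_eq_self_iff.mpr hmem
    calc ‖Dop u e1 f‖ = ‖((Dop u e1 f : KuP u) : L2)‖ := rfl
    _ = ‖Mmul e1 (f : L2)‖ := by rw [hD]
    _ = ‖(f : L2)‖ := norm_Mmul_of_unimod e1_unimod _
    _ = ‖f‖ := rfl


end DTTO
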